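/- The function H_r(y) = Σ_{i=1}^r ( log(max{1, y_{(i)}}) − max{1, y_{(i)}} + 1 ), where y_{(1)} ≥ ⋯ ≥ y_{(p)} are the decreasingly ordered coordinates of y, is concave on the nonnegative orthant [0,∞)^p. -/

import Mathlib

open Finset Set

noncomputable def gg (t : ℝ) : ℝ := Real.log (max 1 t) - max 1 t + 1

lemma key_ineq {a b : ℝ} (ha : 1 ≤ a) (hab : a ≤ b) :
    Real.log b - b ≤ Real.log a - a := by
  have ha0 : (0:ℝ) < a := by linarith
  have hb0 : (0:ℝ) < b := by linarith
  have h1 : Real.log b - Real.log a = Real.log (b / a) := (Real.log_div hb0.ne' ha0.ne').symm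
  have h2 : Real.log (b / a) ≤ b / a - 1 := Real.log_le_sub_one_of_pos (by positivity)
  have h3 : b / a - 1 = (b - a) / a := by field_simp
  have h4 : (b - a) / a ≤ b - a := div_le_self (by linarith) ha
  linarith

lemma gg_anti : Antitone gg := by
  intro a b hab
  have h1 : (1:ℝ) ≤ max 1 a := le_max_left _ _
  have h2 : max 1 a ≤ max 1 b := max_le_max le_rfl hab
  have := key_ineq h1 h2
  simp only [gg]; linarith

lemma gg_concave : ConcaveOn ℝ Set.univ gg := by
  have himg : (fun t : ℝ => max 1 t) '' Set.univ = Set.Ici 1 := by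
    ext x
    simp only [Set.image_univ, Set.mem_range, Set.mem_Ici]
    constructor
    · rintro ⟨t, rfl⟩; exact le_max_left _ _
    · intro hx; exact ⟨x, max_eq_right hx⟩
  have hconv : ConvexOn ℝ Set.univ (fun t : ℝ => max 1 t) := by
    have := (convexOn_const (1:ℝ) convex_univ).sup (convexOn_id (convex_univ (𝕜 := ℝ) (E := ℝ)))
    simpa [Pi.sup_def] using this
  have hlog : ConcaveOn ℝ (Set.Ici (1:ℝ)) (fun t => Real.log t - t + 1) := by
    have h1 : ConcaveOn ℝ (Set.Ici (1:ℝ)) Real.log :=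
      strictConcaveOn_log_Ioi.concaveOn.subset (fun x hx => Set.mem_Ioi.mpr (lt_of_lt_of_le one_pos (Set.mem_Ici.mp hx)))
        (convex_Ici 1)
    have h2 : ConvexOn ℝ (Set.Ici (1:ℝ)) (fun t : ℝ => t) := convexOn_id (convex_Ici 1)
    have := (h1.sub h2).add_const 1
    exact this
  have hanti : AntitoneOn (fun t : ℝ => Real.log t - t + 1) (Set.Ici (1:ℝ)) := by
    intro a ha b hb hab
    have := key_ineq ha hab
    simpa using by linarith
  have := (hlog.subset (le_of_eq himg) (himg ▸ convex_Ici 1)).comp_convexOn hconv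
      (himg ▸ hanti)
  exact this

lemma sum_le_sum_of_forall_le {ι : Type*} [DecidableEq ι] (A B : Finset ι)
    (h : A.card = B.card) (f : ι → ℝ) (hf : ∀ a ∈ A, ∀ b ∈ B, f a ≤ f b) :
    ∑ i ∈ A, f i ≤ ∑ i ∈ B, f i := by
  classical
  have e : A ≃ B := Finset.equivOfCardEq h
  calc ∑ i ∈ A, f i = ∑ a : A, f a := (Finset.sum_attach _ _).symm
    _ ≤ ∑ a : A, f (e a) := by
        refine Finset.sum_le_sum fun a _ => hf a a.2 (e a) (e a).2
    _ = ∑ b : B, f b := e.sum_comp (fun b : B => f b)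
    _ = ∑ i ∈ B, f i := Finset.sum_attach _ _

lemma sum_le_sum_of_card_eq {ι : Type*} [DecidableEq ι] (A B : Finset ι)
    (h : A.card = B.card) (f : ι → ℝ)
    (hf : ∀ a ∈ A \ B, ∀ b ∈ B \ A, f a ≤ f b) :
    ∑ i ∈ A, f i ≤ ∑ i ∈ B, f i := by
  have hA : ∑ i ∈ A ∩ B, f i + ∑ i ∈ A \ B, f i = ∑ i ∈ A, f i :=
    Finset.sum_inter_add_sum_sdiff A B f
  have hB : ∑ i ∈ B ∩ A, f i + ∑ i ∈ B \ A, f i = ∑ i ∈ B, f i :=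
    Finset.sum_inter_add_sum_sdiff B A f
  have hcard : (A \ B).card = (B \ A).card := by
    have h1 := Finset.card_inter_add_card_sdiff A B
    have h2 := Finset.card_inter_add_card_sdiff B A
    rw [Finset.inter_comm] at h2
    omega
  have := sum_le_sum_of_forall_le _ _ hcard f hf
  rw [Finset.inter_comm] at hB
  linarith


/-- `Hr p r y` is the sum of `g(y) = log(max 1 y) - max 1 y + 1` over the `r`
largest coordinates of `y` (i.e. `∑_{i=1}^r g(y_{(i)})` where
`y_{(1)} ≥ ⋯ ≥ y_{(p)}` is the decreasing rearrangement of `y`). -/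
noncomputable def Hr (p r : ℕ) (y : Fin p → ℝ) : ℝ :=
  ∑ j ∈ Finset.univ.filter (fun j : Fin p => p ≤ (j : ℕ) + r),
    (Real.log (max 1 (y (Tuple.sort y j))) - max 1 (y (Tuple.sort y j)) + 1)

lemma card_filter_top (p r : ℕ) (hrp : r ≤ p) :
    (Finset.univ.filter (fun j : Fin p => p ≤ (j : ℕ) + r)).card = r := by
  have : (Finset.univ.filter (fun j : Fin p => p ≤ (j : ℕ) + r)) =
      Finset.map ⟨fun i : Fin r => (⟨p - r + (i : ℕ), by omega⟩ : Fin p),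
        fun a b hab => by
          have : p - r + (a : ℕ) = p - r + (b : ℕ) := congrArg Fin.val hab
          exact Fin.ext (by omega)⟩ Finset.univ := by
    ext j
    simp only [Finset.mem_filter, Finset.mem_univ, true_and, Finset.mem_map,
      Function.Embedding.coeFn_mk]
    constructor
    · intro hj
      refine ⟨⟨(j : ℕ) - (p - r), by omega⟩, Fin.ext ?_⟩
      show p - r + ((j : ℕ) - (p - r)) = j; omega
    · rintro ⟨i, rfl⟩
      have := i.isLt
      show p ≤ p - r + (i : ℕ) + r; omega
  rw [this, Finset.card_map, Finset.card_univ, Fintype.card_fin]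

lemma Hr_eq_inf' (p r : ℕ) (hrp : r ≤ p) (y : Fin p → ℝ)
    (hne : (Finset.powersetCard r (Finset.univ : Finset (Fin p))).Nonempty) :
    Hr p r y =
      (Finset.powersetCard r (Finset.univ : Finset (Fin p))).inf' hne
        (fun S => ∑ i ∈ S, gg (y i)) := by
  classical
  set T := Finset.univ.filter (fun j : Fin p => p ≤ (j : ℕ) + r) with hT
  set S₀ := T.image (Tuple.sort y) with hS₀
  have hcard : S₀.card = r := by
    rw [hS₀, Finset.card_image_of_injective _ (Tuple.sort y).injective,
      card_filter_top p r hrp]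
  have hmem : S₀ ∈ Finset.powersetCard r (Finset.univ : Finset (Fin p)) := by
    rw [Finset.mem_powersetCard]
    exact ⟨Finset.subset_univ _, hcard⟩
  have hHr : Hr p r y = ∑ i ∈ S₀, gg (y i) := by
    rw [hS₀, Finset.sum_image (fun a _ b _ h => (Tuple.sort y).injective h)]
    rfl
  have hmin : ∀ S ∈ Finset.powersetCard r (Finset.univ : Finset (Fin p)),
      ∑ i ∈ S₀, gg (y i) ≤ ∑ i ∈ S, gg (y i) := by
    intro S hS
    rw [Finset.mem_powersetCard] at hS
    refine sum_le_sum_of_card_eq _ _ (by rw [hcard, hS.2]) _ ?_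
    intro a ha b hb
    rw [Finset.mem_sdiff] at ha hb
    obtain ⟨j, hj, rfl⟩ : ∃ j ∈ T, Tuple.sort y j = a := by
      have := ha.1
      rw [hS₀, Finset.mem_image] at this
      obtain ⟨j, hj, hj2⟩ := this
      exact ⟨j, hj, hj2⟩
    set j' := (Tuple.sort y)⁻¹ b with hj'
    have hbj' : Tuple.sort y j' = b := Equiv.apply_symm_apply (Tuple.sort y) b
    have hj'T : j' ∉ T := by
      intro h
      exact hb.2 (hS₀ ▸ Finset.mem_image.mpr ⟨j', h, hbj'⟩)
    rw [hT, Finset.mem_filter] at hj hj'T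
    have hle : j' ≤ j := by
      have h1 : p ≤ (j : ℕ) + r := hj.2
      have h2 : ¬ p ≤ (j' : ℕ) + r := fun h => hj'T ⟨Finset.mem_univ _, h⟩
      exact Fin.le_def.mpr (by omega)
    have := Tuple.monotone_sort y hle
    rw [← hbj']
    exact gg_anti this
  have h1 : (Finset.powersetCard r (Finset.univ : Finset (Fin p))).inf' hne
      (fun S => ∑ i ∈ S, gg (y i)) ≤ ∑ i ∈ S₀, gg (y i) :=
    Finset.inf'_le _ hmem
  have h2 := Finset.le_inf' hne (fun S => ∑ i ∈ S, gg (y i)) hmin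
  rw [hHr]
  linarith

lemma concaveOn_inf' {E : Type*} [AddCommGroup E] [Module ℝ E] {ι : Type*}
    (t : Finset ι) (ht : t.Nonempty) {s : Set E} (f : ι → E → ℝ)
    (hf : ∀ i ∈ t, ConcaveOn ℝ s (f i)) :
    ConcaveOn ℝ s (fun x => t.inf' ht (fun i => f i x)) := by
  classical
  induction ht using Finset.Nonempty.cons_induction with
  | singleton a =>
    simp only [Finset.inf'_singleton]
    exact hf a (by simp)
  | cons a u ha hu ih =>
    have hrw : (fun x => (Finset.cons a u ha).inf' (Finset.cons_nonempty ha) fun i => f i x)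
        = (f a) ⊓ (fun x => u.inf' hu fun i => f i x) := by
      funext x
      exact Finset.inf'_cons (f := fun i => f i x) (H := hu)
    rw [hrw]
    exact (hf a (Finset.mem_cons_self a u)).inf
      (ih (fun i hi => hf i (Finset.mem_cons_of_mem hi)))

lemma concave_sum_gg (p : ℕ) (S : Finset (Fin p)) :
    ConcaveOn ℝ {y : Fin p → ℝ | ∀ i, 0 ≤ y i} (fun y : Fin p → ℝ => ∑ i ∈ S, gg (y i)) := by
  classical
  have hconv : Convex ℝ {y : Fin p → ℝ | ∀ i, 0 ≤ y i} := by
    intro x hx z hz a b ha hb hab i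
    exact add_nonneg (mul_nonneg ha (hx i)) (mul_nonneg hb (hz i))
  have hterm : ∀ i : Fin p, ConcaveOn ℝ {y : Fin p → ℝ | ∀ i, 0 ≤ y i}
      (fun y : Fin p → ℝ => gg (y i)) := by
    intro i
    have := gg_concave.comp_linearMap (LinearMap.proj (R := ℝ) (φ := fun _ : Fin p => ℝ) i)
    exact (this.subset (by simp) hconv)
  induction S using Finset.induction_on with
  | empty => simpa using concaveOn_const 0 hconv
  | @insert a u hnotmem ih =>
    have := (hterm a).add ih
    simp only [Finset.sum_insert hnotmem]
    simpa [Pi.add_def] using this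

theorem Hr_concave (p r : ℕ) (hr1 : 1 ≤ r) (hrp : r ≤ p) :
    ConcaveOn ℝ {y : Fin p → ℝ | ∀ i, 0 ≤ y i} (Hr p r) := by
  classical
  have hconv : Convex ℝ {y : Fin p → ℝ | ∀ i, 0 ≤ y i} := by
    intro x hx z hz a b ha hb hab i
    exact add_nonneg (mul_nonneg ha (hx i)) (mul_nonneg hb (hz i))
  have hne : (Finset.powersetCard r (Finset.univ : Finset (Fin p))).Nonempty := by
    apply Finset.powersetCard_nonempty.mpr
    simpa using hrp
  have hrepr : Hr p r = fun y =>
      (Finset.powersetCard r (Finset.univ : Finset (Fin p))).inf' hne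
        (fun S => ∑ i ∈ S, gg (y i)) := by
    funext y
    exact Hr_eq_inf' p r hrp y hne
  rw [hrepr]
  exact concaveOn_inf' _ hne _ (fun S _ => concave_sum_gg p S)
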